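/- arXiv:1309.4600 — 4 statements merged into one kernel-verified Lean document; each statement's English description precedes it below -/
import Mathlib

section
/- Let 0 < β < η, T > 0, and ψ : (-∞, T] → ℝ locally integrable. A locally integrable function φ satisfies φ(t) - β∫ₜᵀ e^{-η(s-t)} φ(s) ds = ψ(t) for all t ≤ T if and only if φ(t) = ψ(t) + β∫ₜᵀ e^{(β-η)(s-t)} ψ(s) ds for all t ≤ T. -/
open MeasureTheory intervalIntegral

lemma exp_kernel_integrableOn {f : ℝ → ℝ} (hf : LocallyIntegrable f volume)
    (c d t T : ℝ) :
    IntegrableOn (fun s => Real.exp (c * (s - d)) * f s) (Set.Ioc t T) volume := by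
  have h1 : IntegrableOn f (Set.Icc t T) volume :=
    hf.integrableOn_isCompact isCompact_Icc
  have h2 : ContinuousOn (fun s => Real.exp (c * (s - d))) (Set.Icc t T) :=
    (Real.continuous_exp.comp (by continuity)).continuousOn
  exact (IntegrableOn.continuousOn_mul h2 h1 isCompact_Icc).mono_set
    Set.Ioc_subset_Icc_self

lemma inner_val (a b t r : ℝ) (hab : a ≠ b) :
    ∫ s in t..r, Real.exp (a * (s - t)) * Real.exp (b * (r - s))
      = (Real.exp (a * (r - t)) - Real.exp (b * (r - t))) / (a - b) := by
  have hab' : a - b ≠ 0 := sub_ne_zero.2 hab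
  have key : ∀ x : ℝ, HasDerivAt
      (fun s => (Real.exp (b * (r - t)) * Real.exp ((a - b) * (s - t))) / (a - b))
      (Real.exp (a * (x - t)) * Real.exp (b * (r - x))) x := by
    intro x
    have h1 : HasDerivAt (fun s : ℝ => (a - b) * (s - t)) (a - b) x := by
      simpa using ((hasDerivAt_id x).sub_const t).const_mul (a - b)
    have h3 := ((h1.exp).const_mul (Real.exp (b * (r - t)))).div_const (a - b)
    refine h3.congr_deriv ?_
    rw [mul_div_assoc, mul_div_cancel_right₀ _ hab', ← Real.exp_add, ← Real.exp_add]
    exact congrArg Real.exp (by ring)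
  have hcont : Continuous fun s => Real.exp (a * (s - t)) * Real.exp (b * (r - s)) := by
    continuity
  rw [intervalIntegral.integral_eq_sub_of_hasDerivAt (fun x _ => key x)
    (hcont.intervalIntegrable t r)]
  have h4 : Real.exp (b * (r - t)) * Real.exp ((a - b) * (r - t)) = Real.exp (a * (r - t)) := by
    rw [← Real.exp_add]; exact congrArg Real.exp (by ring)
  have h5 : Real.exp (b * (r - t)) * Real.exp ((a - b) * (t - t)) = Real.exp (b * (r - t)) := by
    simp
  rw [h4, h5]
  ring

lemma tri_swap (t T a b : ℝ) (f : ℝ → ℝ)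
    (hf : IntegrableOn f (Set.Ioc t T) volume) :
    ∫ s in Set.Ioc t T, ∫ r in Set.Ioc s T,
        Real.exp (a * (s - t)) * Real.exp (b * (r - s)) * f r
      = ∫ r in Set.Ioc t T,
          (∫ s in Set.Ioc t r, Real.exp (a * (s - t)) * Real.exp (b * (r - s))) * f r := by
  set μ := volume.restrict (Set.Ioc t T) with hμ
  haveI : IsFiniteMeasure μ := by
    constructor
    rw [hμ, Measure.restrict_apply_univ, Real.volume_Ioc]
    exact ENNReal.ofReal_lt_top
  set S : Set (ℝ × ℝ) := {p | p.1 < p.2} with hSdef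
  have hS : MeasurableSet S := measurableSet_lt measurable_fst measurable_snd
  set H : ℝ × ℝ → ℝ :=
    fun p => Real.exp (a * (p.1 - t)) * Real.exp (b * (p.2 - p.1)) * f p.2 with hHdef
  set G : ℝ × ℝ → ℝ := S.indicator H with hGdef
  -- integrability of G on the product
  have hker : Continuous fun p : ℝ × ℝ => Real.exp (a * (p.1 - t)) * Real.exp (b * (p.2 - p.1)) := by
    continuity
  have hfm : AEStronglyMeasurable (fun p : ℝ × ℝ => f p.2) (μ.prod μ) :=
    hf.aestronglyMeasurable.comp_quasiMeasurePreserving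
      Measure.quasiMeasurePreserving_snd
  have hHm : AEStronglyMeasurable H (μ.prod μ) := hker.aestronglyMeasurable.mul hfm
  have hGm : AEStronglyMeasurable G (μ.prod μ) := hHm.indicator hS
  set C : ℝ := Real.exp (|a| * (T - t)) * Real.exp (|b| * (T - t)) with hCdef
  have hbound : Integrable (fun p : ℝ × ℝ => C * |f p.2|) (μ.prod μ) :=
    (integrable_const C).mul_prod hf.abs
  have hae : ∀ᵐ p ∂(μ.prod μ), ‖G p‖ ≤ C * |f p.2| := by
    rw [hμ, Measure.prod_restrict]
    filter_upwards [ae_restrict_mem (measurableSet_Ioc.prod measurableSet_Ioc)] with p hp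
    obtain ⟨hp1, hp2⟩ := hp
    obtain ⟨h1a, h1b⟩ := hp1
    obtain ⟨h2a, h2b⟩ := hp2
    have hCpos : 0 < C := by positivity
    by_cases hps : p ∈ S
    · rw [hGdef, Set.indicator_of_mem hps, hHdef]
      have hx1 : |p.1 - t| ≤ T - t := by
        rw [abs_le]; constructor <;> linarith
      have hx2 : |p.2 - p.1| ≤ T - t := by
        rw [abs_le]; constructor <;> linarith
      have h1 : Real.exp (a * (p.1 - t)) ≤ Real.exp (|a| * (T - t)) := by
        apply Real.exp_le_exp.2
        calc a * (p.1 - t) ≤ |a * (p.1 - t)| := le_abs_self _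
          _ = |a| * |p.1 - t| := abs_mul _ _
          _ ≤ |a| * (T - t) := by
              exact mul_le_mul_of_nonneg_left hx1 (abs_nonneg a)
      have h2 : Real.exp (b * (p.2 - p.1)) ≤ Real.exp (|b| * (T - t)) := by
        apply Real.exp_le_exp.2
        calc b * (p.2 - p.1) ≤ |b * (p.2 - p.1)| := le_abs_self _
          _ = |b| * |p.2 - p.1| := abs_mul _ _
          _ ≤ |b| * (T - t) := by
              exact mul_le_mul_of_nonneg_left hx2 (abs_nonneg b)
      rw [Real.norm_eq_abs, abs_mul, abs_mul, Real.abs_exp, Real.abs_exp, hCdef]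
      have : Real.exp (a * (p.1 - t)) * Real.exp (b * (p.2 - p.1))
          ≤ Real.exp (|a| * (T - t)) * Real.exp (|b| * (T - t)) := by
        apply mul_le_mul h1 h2 (Real.exp_pos _).le (Real.exp_pos _).le
      exact mul_le_mul_of_nonneg_right this (abs_nonneg _)
    · rw [hGdef, Set.indicator_of_notMem hps]
      simp only [norm_zero]
      positivity
  have hGint : Integrable G (μ.prod μ) := Integrable.mono' hbound hGm hae
  have step1 : ∀ s ∈ Set.Ioc t T,
      (∫ r in Set.Ioc s T, Real.exp (a * (s - t)) * Real.exp (b * (r - s)) * f r)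
        = ∫ r, G (s, r) ∂μ := by
    intro s hs
    have heq : (fun r => G (s, r)) = (Set.Ioi s).indicator
        (fun r => Real.exp (a * (s - t)) * Real.exp (b * (r - s)) * f r) := by
      ext r
      simp only [hGdef, hHdef, hSdef, Set.indicator_apply, Set.mem_setOf_eq, Set.mem_Ioi]
    rw [hμ, heq, setIntegral_indicator measurableSet_Ioi, Set.Ioc_inter_Ioi,
      sup_eq_right.2 hs.1.le]
  have step3 : ∀ r ∈ Set.Ioc t T,
      (∫ s, G (s, r) ∂μ)
        = (∫ s in Set.Ioc t r, Real.exp (a * (s - t)) * Real.exp (b * (r - s))) * f r := by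
    intro r hr
    have heq : (fun s => G (s, r)) = (Set.Iio r).indicator
        (fun s => Real.exp (a * (s - t)) * Real.exp (b * (r - s)) * f r) := by
      ext s
      simp only [hGdef, hHdef, hSdef, Set.indicator_apply, Set.mem_setOf_eq, Set.mem_Iio]
    have hset : Set.Ioc t T ∩ Set.Iio r = Set.Ioo t r := by
      ext x
      simp only [Set.mem_inter_iff, Set.mem_Ioc, Set.mem_Iio, Set.mem_Ioo]
      constructor
      · rintro ⟨⟨h1, _⟩, h3⟩; exact ⟨h1, h3⟩
      · rintro ⟨h1, h3⟩; exact ⟨⟨h1, h3.le.trans hr.2⟩, h3⟩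
    rw [hμ, heq, setIntegral_indicator measurableSet_Iio, hset,
      ← integral_Ioc_eq_integral_Ioo, MeasureTheory.integral_mul_const]
  calc ∫ s in Set.Ioc t T, ∫ r in Set.Ioc s T,
        Real.exp (a * (s - t)) * Real.exp (b * (r - s)) * f r
      = ∫ s, (∫ r, G (s, r) ∂μ) ∂μ := by
        refine integral_congr_ae ?_
        rw [hμ]
        filter_upwards [ae_restrict_mem measurableSet_Ioc] with s hs
        exact step1 s hs
    _ = ∫ r, (∫ s, G (s, r) ∂μ) ∂μ := by
        apply integral_integral_swap
        exact hGint
    _ = ∫ r in Set.Ioc t T,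
          (∫ s in Set.Ioc t r, Real.exp (a * (s - t)) * Real.exp (b * (r - s))) * f r := by
        refine integral_congr_ae ?_
        rw [hμ]
        filter_upwards [ae_restrict_mem measurableSet_Ioc] with r hr
        exact step3 r hr

lemma double_eval (a b t T : ℝ) (hab : a ≠ b) (ht : t ≤ T) (f : ℝ → ℝ)
    (hf : IntegrableOn f (Set.Ioc t T) volume) :
    ∫ s in t..T, Real.exp (a * (s - t)) * ∫ r in s..T, Real.exp (b * (r - s)) * f r
      = ∫ r in t..T,
          ((Real.exp (a * (r - t)) - Real.exp (b * (r - t))) / (a - b)) * f r := by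
  rw [intervalIntegral.integral_of_le ht, intervalIntegral.integral_of_le ht]
  have h1 : ∫ s in Set.Ioc t T,
      Real.exp (a * (s - t)) * ∫ r in s..T, Real.exp (b * (r - s)) * f r
      = ∫ s in Set.Ioc t T, ∫ r in Set.Ioc s T,
          Real.exp (a * (s - t)) * Real.exp (b * (r - s)) * f r := by
    refine integral_congr_ae ?_
    filter_upwards [ae_restrict_mem measurableSet_Ioc] with s hs
    rw [intervalIntegral.integral_of_le hs.2, ← MeasureTheory.integral_const_mul]
    refine integral_congr_ae (Filter.Eventually.of_forall fun r => by ring)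
  rw [h1, tri_swap t T a b f hf]
  refine integral_congr_ae ?_
  filter_upwards [ae_restrict_mem measurableSet_Ioc] with r hr
  rw [← intervalIntegral.integral_of_le hr.1.le, inner_val a b t r hab]

/-- For `0 < β < η`, a locally integrable `φ` solves the backward Volterra equation
`φ t - β ∫ₜᵀ e^{-η(s-t)} φ s ds = ψ t` on `(-∞, T]` iff it is given by the
variation-of-constants formula `φ t = ψ t + β ∫ₜᵀ e^{(β-η)(s-t)} ψ s ds`. -/
theorem backward_volterra_iff (β η T : ℝ) (hβ : 0 < β) (hη : β < η)
    (φ ψ : ℝ → ℝ)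
    (hφ : LocallyIntegrable φ volume) (hψ : LocallyIntegrable ψ volume) :
    (∀ t ≤ T, φ t - β * ∫ s in t..T, Real.exp (-η * (s - t)) * φ s = ψ t) ↔
    (∀ t ≤ T, φ t = ψ t + β * ∫ s in t..T, Real.exp ((β - η) * (s - t)) * ψ s) := by
  have hβη : (β - η : ℝ) ≠ -η := by intro h; apply hβ.ne'; linarith
  have hηβ : (-η : ℝ) ≠ β - η := fun h => hβη h.symm
  have hβ0 : β ≠ 0 := ne_of_gt hβ
  constructor
  · intro H1 t ht
    have hφIoc : IntegrableOn φ (Set.Ioc t T) volume :=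
      (hφ.integrableOn_isCompact isCompact_Icc).mono_set Set.Ioc_subset_Icc_self
    set P := ∫ s in t..T, Real.exp ((β - η) * (s - t)) * φ s with hP
    set Q := ∫ s in t..T, Real.exp (-η * (s - t)) * φ s with hQ
    set R := ∫ s in t..T, Real.exp ((β - η) * (s - t)) * ψ s with hR
    have hψs : ∀ s ≤ T, β * (∫ r in s..T, Real.exp (-η * (r - s)) * φ r) = φ s - ψ s := by
      intro s hs
      have := H1 s hs
      linarith
    -- integrability of the two pieces
    have hIφ : IntervalIntegrable (fun s => Real.exp ((β - η) * (s - t)) * φ s) volume t T :=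
      (intervalIntegrable_iff_integrableOn_Ioc_of_le ht).2
        (exp_kernel_integrableOn hφ (β - η) t t T)
    have hI2 : IntervalIntegrable
        (fun s => Real.exp ((β - η) * (s - t)) *
          (β * ∫ r in s..T, Real.exp (-η * (r - s)) * φ r)) volume t T := by
      rw [intervalIntegrable_iff_integrableOn_Ioc_of_le ht]
      have hsub : IntegrableOn (fun s => Real.exp ((β - η) * (s - t)) * (φ s - ψ s))
          (Set.Ioc t T) volume := by
        have h := (exp_kernel_integrableOn hφ (β - η) t t T).sub
          (exp_kernel_integrableOn hψ (β - η) t t T)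
        exact h.congr (Filter.Eventually.of_forall fun s => by simp [Pi.sub_apply]; ring)
      refine hsub.congr ?_
      filter_upwards [ae_restrict_mem measurableSet_Ioc] with s hs
      rw [hψs s hs.2]
    have e1 : R = P - ∫ s in t..T, Real.exp ((β - η) * (s - t)) *
        (β * ∫ r in s..T, Real.exp (-η * (r - s)) * φ r) := by
      rw [hR, hP, ← intervalIntegral.integral_sub hIφ hI2]
      apply intervalIntegral.integral_congr
      intro s hs
      rw [Set.uIcc_of_le ht] at hs
      dsimp only
      rw [hψs s hs.2]
      ring
    have e2 : (∫ s in t..T, Real.exp ((β - η) * (s - t)) *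
        (β * ∫ r in s..T, Real.exp (-η * (r - s)) * φ r))
        = β * ∫ s in t..T, Real.exp ((β - η) * (s - t)) *
            ∫ r in s..T, Real.exp (-η * (r - s)) * φ r := by
      rw [← intervalIntegral.integral_const_mul]
      apply intervalIntegral.integral_congr
      intro s _
      dsimp only
      ring
    have e3 := double_eval (β - η) (-η) t T hβη ht φ hφIoc
    have e4 : β * (∫ r in t..T,
        ((Real.exp ((β - η) * (r - t)) - Real.exp (-η * (r - t))) / (β - η - -η)) * φ r)
        = P - Q := by
      rw [hP, hQ, ← intervalIntegral.integral_sub hIφ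
        ((intervalIntegrable_iff_integrableOn_Ioc_of_le ht).2
          (exp_kernel_integrableOn hφ (-η) t t T)),
        ← intervalIntegral.integral_const_mul]
      apply intervalIntegral.integral_congr
      intro s _
      dsimp only
      have hb : β - η - -η = β := by ring
      rw [hb]
      field_simp
    have hQR : R = Q := by
      rw [e1, e2, e3] at *
      linarith
    have hH1t := H1 t ht
    rw [hQR]
    linarith
  · intro H2 t ht
    have hψIoc : IntegrableOn ψ (Set.Ioc t T) volume :=
      (hψ.integrableOn_isCompact isCompact_Icc).mono_set Set.Ioc_subset_Icc_self
    set Qφ := ∫ s in t..T, Real.exp (-η * (s - t)) * φ s with hQφ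
    set Qψ := ∫ s in t..T, Real.exp (-η * (s - t)) * ψ s with hQψ
    set Rψ := ∫ s in t..T, Real.exp ((β - η) * (s - t)) * ψ s with hRψ
    have hφs : ∀ s ≤ T, φ s = ψ s + β * ∫ r in s..T, Real.exp ((β - η) * (r - s)) * ψ r :=
      H2
    have hIψ : IntervalIntegrable (fun s => Real.exp (-η * (s - t)) * ψ s) volume t T :=
      (intervalIntegrable_iff_integrableOn_Ioc_of_le ht).2
        (exp_kernel_integrableOn hψ (-η) t t T)
    have hIψ2 : IntervalIntegrable (fun s => Real.exp ((β - η) * (s - t)) * ψ s) volume t T :=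
      (intervalIntegrable_iff_integrableOn_Ioc_of_le ht).2
        (exp_kernel_integrableOn hψ (β - η) t t T)
    have hI2 : IntervalIntegrable
        (fun s => Real.exp (-η * (s - t)) *
          (β * ∫ r in s..T, Real.exp ((β - η) * (r - s)) * ψ r)) volume t T := by
      rw [intervalIntegrable_iff_integrableOn_Ioc_of_le ht]
      have hsub : IntegrableOn (fun s => Real.exp (-η * (s - t)) * (φ s - ψ s))
          (Set.Ioc t T) volume := by
        have h := (exp_kernel_integrableOn hφ (-η) t t T).sub
          (exp_kernel_integrableOn hψ (-η) t t T)
        exact h.congr (Filter.Eventually.of_forall fun s => by simp [Pi.sub_apply]; ring)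
      refine hsub.congr ?_
      filter_upwards [ae_restrict_mem measurableSet_Ioc] with s hs
      rw [hφs s hs.2]
      ring
    have e1 : Qφ = Qψ + ∫ s in t..T, Real.exp (-η * (s - t)) *
        (β * ∫ r in s..T, Real.exp ((β - η) * (r - s)) * ψ r) := by
      rw [hQφ, hQψ, ← intervalIntegral.integral_add hIψ hI2]
      apply intervalIntegral.integral_congr
      intro s hs
      rw [Set.uIcc_of_le ht] at hs
      dsimp only
      rw [hφs s hs.2]
      ring
    have e2 : (∫ s in t..T, Real.exp (-η * (s - t)) *
        (β * ∫ r in s..T, Real.exp ((β - η) * (r - s)) * ψ r))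
        = β * ∫ s in t..T, Real.exp (-η * (s - t)) *
            ∫ r in s..T, Real.exp ((β - η) * (r - s)) * ψ r := by
      rw [← intervalIntegral.integral_const_mul]
      apply intervalIntegral.integral_congr
      intro s _
      dsimp only
      ring
    have e3 := double_eval (-η) (β - η) t T hηβ ht ψ hψIoc
    have e4 : β * (∫ r in t..T,
        ((Real.exp (-η * (r - t)) - Real.exp ((β - η) * (r - t))) / (-η - (β - η))) * ψ r)
        = Rψ - Qψ := by
      rw [hRψ, hQψ, ← intervalIntegral.integral_sub hIψ2 hIψ,
        ← intervalIntegral.integral_const_mul]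
      apply intervalIntegral.integral_congr
      intro s _
      dsimp only
      have hb : -η - (β - η) = -β := by ring
      rw [hb, div_neg, ← neg_div, neg_sub, div_mul_eq_mul_div, mul_comm β,
        div_mul_cancel₀ _ hβ0, sub_mul]
    have hQR : Qφ = Rψ := by
      rw [e1, e2, e3] at *
      linarith
    have hH2t := H2 t ht
    rw [hQR]
    linarith
end

section
/- Let 0 < β < η and T > 0. There exist positive constants c₁, c₂ (depending on β, η, T) such that for every pair of continuous functions φ, ψ on [0,T] related by φ(t) = ψ(t) + β∫ₜᵀ e^{(β-η)(s-t)} ψ(s) ds, one has c₁ ∫₀ᵀ |φ(t)|² dt ≤ ∫₀ᵀ |ψ(t)|² dt ≤ c₂ ∫₀ᵀ |φ(t)|² dt. -/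
open MeasureTheory intervalIntegral Set

/-- interval integrability of a function continuous on `Icc 0 T`. -/
private lemma ii_of_contOn {u : ℝ → ℝ} {T : ℝ} (hu : ContinuousOn u (Icc 0 T))
    {a b : ℝ} (ha : a ∈ Icc (0:ℝ) T) (hb : b ∈ Icc (0:ℝ) T) :
    IntervalIntegrable u volume a b :=
  (hu.mono (uIcc_subset_Icc ha hb)).intervalIntegrable

/-- Cauchy–Schwarz for interval integrals, elementary form. -/
private lemma cs_aux {f : ℝ → ℝ} {T : ℝ} (hT : 0 < T)
    (hf : ContinuousOn f (Icc 0 T)) :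
    (∫ t in (0:ℝ)..T, f t) ^ 2 ≤ T * ∫ t in (0:ℝ)..T, f t ^ 2 := by
  set I : ℝ := ∫ t in (0:ℝ)..T, f t with hI
  have hii : IntervalIntegrable f volume 0 T :=
    ii_of_contOn hf (by constructor <;> simp [hT.le]) (by constructor <;> simp [hT.le])
  have hii2 : IntervalIntegrable (fun t => f t ^ 2) volume 0 T :=
    ii_of_contOn (by fun_prop) (by constructor <;> simp [hT.le]) (by constructor <;> simp [hT.le])
  have h0 : (0:ℝ) ≤ ∫ t in (0:ℝ)..T, (T * f t - I) ^ 2 := by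
    apply intervalIntegral.integral_nonneg hT.le
    intro t _; positivity
  have hexp : ∀ t, (T * f t - I) ^ 2 = T^2 * f t ^2 - (2 * T * I) * f t + I^2 := by
    intro t; ring
  have : (∫ t in (0:ℝ)..T, (T * f t - I) ^ 2)
      = T^2 * (∫ t in (0:ℝ)..T, f t ^2) - (2*T*I) * I + I^2 * T := by
    simp only [hexp]
    rw [intervalIntegral.integral_add (((hii2.const_mul _).sub ((hii.const_mul _)))) 
        intervalIntegrable_const,
      intervalIntegral.integral_sub (hii2.const_mul _) (hii.const_mul _),
      intervalIntegral.integral_const_mul, intervalIntegral.integral_const_mul,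
      intervalIntegral.integral_const]
    simp only [smul_eq_mul]
    ring
  rw [this] at h0
  nlinarith [h0]

/-- Grönwall-type estimate for a backward integral inequality. -/
private lemma gronwall_aux {β T : ℝ} (hβ : 0 < β) (hT : 0 < T) {u f : ℝ → ℝ}
    (hu : ContinuousOn u (Icc 0 T)) (hf : ContinuousOn f (Icc 0 T))
    (hu0 : ∀ t ∈ Icc (0:ℝ) T, 0 ≤ u t) (hf0 : ∀ t ∈ Icc (0:ℝ) T, 0 ≤ f t)
    (hle : ∀ t ∈ Icc (0:ℝ) T, u t ≤ f t + β * ∫ s in t..T, u s) :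
    ∀ t ∈ Icc (0:ℝ) T, (∫ s in t..T, u s) ≤ Real.exp (β*T) * ∫ s in (0:ℝ)..T, f s := by
  have h0T : (0:ℝ) ∈ Icc (0:ℝ) T := ⟨le_refl _, hT.le⟩
  have hTT : T ∈ Icc (0:ℝ) T := ⟨hT.le, le_refl _⟩
  set G : ℝ → ℝ := fun t => (∫ s in (0:ℝ)..T, u s) - ∫ s in (0:ℝ)..t, u s with hG
  have hGeq : ∀ t ∈ Icc (0:ℝ) T, G t = ∫ s in t..T, u s := by
    intro t ht
    rw [hG, sub_eq_iff_eq_add']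
    exact (intervalIntegral.integral_add_adjacent_intervals
      (ii_of_contOn hu h0T ht) (ii_of_contOn hu ht hTT)).symm
  have hprim : ∀ {g : ℝ → ℝ}, ContinuousOn g (Icc 0 T) →
      ContinuousOn (fun t => ∫ s in (0:ℝ)..t, g s) (Icc 0 T) := by
    intro g hg
    have h := intervalIntegral.continuousOn_primitive_interval'
      (ii_of_contOn hg h0T hTT) (by rw [uIcc_of_le hT.le]; exact h0T)
    rwa [uIcc_of_le hT.le] at h
  set W : ℝ → ℝ := fun t => Real.exp (β*t) * G t + ∫ s in (0:ℝ)..t, Real.exp (β*s) * f s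
    with hW
  have hef : ContinuousOn (fun s => Real.exp (β*s) * f s) (Icc 0 T) := by
    exact (Real.continuous_exp.comp (continuous_const.mul continuous_id)).continuousOn.mul hf
  -- derivative of W at interior points
  have hWd : ∀ t ∈ Ioo (0:ℝ) T, HasDerivAt W
      (β * Real.exp (β*t) * G t - Real.exp (β*t) * u t + Real.exp (β*t) * f t) t := by
    intro t ht
    have htI : t ∈ Icc (0:ℝ) T := ⟨ht.1.le, ht.2.le⟩
    have hmem : Icc (0:ℝ) T ∈ nhds t := Icc_mem_nhds ht.1 ht.2
    have hud : HasDerivAt (fun t => ∫ s in (0:ℝ)..t, u s) (u t) t := by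
      refine intervalIntegral.integral_hasDerivAt_right (ii_of_contOn hu h0T htI)
        ⟨Icc 0 T, hmem, (hu.aestronglyMeasurable measurableSet_Icc)⟩
        (hu.continuousAt hmem)
    have hGd : HasDerivAt G (-(u t)) t := by
      have h := (hasDerivAt_const t (∫ s in (0:ℝ)..T, u s)).sub hud
      rw [zero_sub] at h
      exact h
    have hed : HasDerivAt (fun t => Real.exp (β*t)) (β * Real.exp (β*t)) t := by
      exact ((Real.hasDerivAt_exp (β*t)).comp t
        ((hasDerivAt_id t).const_mul β)).congr_deriv (by simp only [id_eq, mul_one]; ring)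
    have hfd : HasDerivAt (fun t => ∫ s in (0:ℝ)..t, Real.exp (β*s) * f s)
        (Real.exp (β*t) * f t) t := by
      refine intervalIntegral.integral_hasDerivAt_right (ii_of_contOn hef h0T htI)
        ⟨Icc 0 T, hmem, (hef.aestronglyMeasurable measurableSet_Icc)⟩
        (hef.continuousAt hmem)
    have := (hed.mul hGd).add hfd
    exact this.congr_deriv (by ring)
  -- W is monotone on [0,T]
  have hWc : ContinuousOn W (Icc 0 T) := by
    apply ContinuousOn.add
    · apply ContinuousOn.mul
      · exact (Real.continuous_exp.comp (continuous_const.mul continuous_id)).continuousOn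
      · exact continuousOn_const.sub (hprim hu)
    · exact hprim hef
  have hmono : MonotoneOn W (Icc 0 T) := by
    apply monotoneOn_of_deriv_nonneg (convex_Icc 0 T) hWc
    · intro t ht
      rw [interior_Icc] at ht
      exact (hWd t ht).differentiableAt.differentiableWithinAt
    · intro t ht
      rw [interior_Icc] at ht
      rw [(hWd t ht).deriv]
      have htI : t ∈ Icc (0:ℝ) T := ⟨ht.1.le, ht.2.le⟩
      have h1 := hle t htI
      rw [← hGeq t htI] at h1
      have he : (0:ℝ) < Real.exp (β*t) := Real.exp_pos _
      nlinarith [h1, he]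
  -- conclude
  intro t ht
  have hWle : W t ≤ W T := hmono ht hTT (ht.2)
  have hGT : G T = 0 := by
    rw [hGeq T hTT, intervalIntegral.integral_same]
  have hsplit : (∫ s in (0:ℝ)..T, Real.exp (β*s) * f s)
      - (∫ s in (0:ℝ)..t, Real.exp (β*s) * f s) = ∫ s in t..T, Real.exp (β*s) * f s := by
    rw [sub_eq_iff_eq_add']
    exact (intervalIntegral.integral_add_adjacent_intervals
      (ii_of_contOn hef h0T ht) (ii_of_contOn hef ht hTT)).symm
  have hkey : Real.exp (β*t) * G t ≤ ∫ s in t..T, Real.exp (β*s) * f s := by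
    have := hWle
    rw [hW] at this
    simp only [hGT, mul_zero, zero_add] at this
    linarith [hsplit, this]
  have h2 : (∫ s in t..T, Real.exp (β*s) * f s) ≤ ∫ s in t..T, Real.exp (β*T) * f s := by
    apply intervalIntegral.integral_mono_on ht.2
      (ii_of_contOn hef ht hTT)
      ((ii_of_contOn hf ht hTT).const_mul _)
    intro s hs
    have hsI : s ∈ Icc (0:ℝ) T := ⟨le_trans ht.1 hs.1, hs.2⟩
    have : Real.exp (β*s) ≤ Real.exp (β*T) := by
      apply Real.exp_le_exp.2
      exact mul_le_mul_of_nonneg_left hsI.2 hβ.le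
    exact mul_le_mul_of_nonneg_right this (hf0 s hsI)
  have h3 : (∫ s in t..T, Real.exp (β*T) * f s) ≤ ∫ s in (0:ℝ)..T, Real.exp (β*T) * f s := by
    rw [← sub_nonneg, ← intervalIntegral.integral_add_adjacent_intervals
      ((ii_of_contOn hf h0T ht).const_mul _) ((ii_of_contOn hf ht hTT).const_mul _)]
    have : (0:ℝ) ≤ ∫ s in (0:ℝ)..t, Real.exp (β*T) * f s := by
      apply intervalIntegral.integral_nonneg ht.1
      intro s hs
      exact mul_nonneg (Real.exp_nonneg _) (hf0 s ⟨hs.1, le_trans hs.2 ht.2⟩)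
    linarith
  have h4 : (∫ s in (0:ℝ)..T, Real.exp (β*T) * f s) = Real.exp (β*T) * ∫ s in (0:ℝ)..T, f s :=
    intervalIntegral.integral_const_mul _ _
  have hGnn : G t ≤ Real.exp (β*t) * G t := by
    have hG0 : 0 ≤ G t := by
      rw [hGeq t ht]
      exact intervalIntegral.integral_nonneg ht.2 (fun s hs => hu0 s ⟨le_trans ht.1 hs.1, hs.2⟩)
    nlinarith [Real.one_le_exp (mul_nonneg hβ.le ht.1), hG0]
  rw [← hGeq t ht]
  linarith

/-- the L² bound from a pointwise bound `u t ≤ f t + A ∫₀ᵀ f`. -/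
private lemma l2_aux {T A : ℝ} (hT : 0 < T) (hA : 0 ≤ A) {u f : ℝ → ℝ}
    (hu : ContinuousOn u (Icc 0 T)) (hf : ContinuousOn f (Icc 0 T))
    (hu0 : ∀ t ∈ Icc (0:ℝ) T, 0 ≤ u t) (hf0 : ∀ t ∈ Icc (0:ℝ) T, 0 ≤ f t)
    (h : ∀ t ∈ Icc (0:ℝ) T, u t ≤ f t + A * ∫ s in (0:ℝ)..T, f s) :
    (∫ t in (0:ℝ)..T, u t ^ 2) ≤ (2 + 2*A^2*T^2) * ∫ t in (0:ℝ)..T, f t ^ 2 := by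
  have h0T : (0:ℝ) ∈ Icc (0:ℝ) T := ⟨le_refl _, hT.le⟩
  have hTT : T ∈ Icc (0:ℝ) T := ⟨hT.le, le_refl _⟩
  set I : ℝ := ∫ s in (0:ℝ)..T, f s with hI
  have hcs : I ^ 2 ≤ T * ∫ t in (0:ℝ)..T, f t ^ 2 := cs_aux hT hf
  have hptwise : ∀ t ∈ Icc (0:ℝ) T, u t ^ 2 ≤ 2 * f t ^ 2 + 2 * (A*I)^2 := by
    intro t ht
    have h1 := h t ht
    have h2 := hu0 t ht
    nlinarith [sq_nonneg (f t - A*I), sq_nonneg (u t - f t - A*I)]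
  have hmono : (∫ t in (0:ℝ)..T, u t ^ 2) ≤ ∫ t in (0:ℝ)..T, (2 * f t ^ 2 + 2 * (A*I)^2) := by
    apply intervalIntegral.integral_mono_on hT.le
      (ii_of_contOn (by fun_prop) h0T hTT)
      (((ii_of_contOn (u := fun t => f t ^ 2) (by fun_prop) h0T hTT).const_mul 2).add
        intervalIntegrable_const)
    exact hptwise
  have heval : (∫ t in (0:ℝ)..T, (2 * f t ^ 2 + 2 * (A*I)^2))
      = 2 * (∫ t in (0:ℝ)..T, f t ^ 2) + 2 * (A*I)^2 * T := by
    rw [intervalIntegral.integral_add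
      ((ii_of_contOn (u := fun t => f t ^ 2) (by fun_prop) h0T hTT).const_mul 2)
      intervalIntegrable_const,
      intervalIntegral.integral_const_mul, intervalIntegral.integral_const]
    simp only [smul_eq_mul]
    ring
  rw [heval] at hmono
  have h2 : 2 * A^2 * T * I^2 ≤ 2 * A^2 * T * (T * ∫ t in (0:ℝ)..T, f t ^ 2) :=
    mul_le_mul_of_nonneg_left hcs (by positivity)
  nlinarith [hmono, h2]

/-- Two-sided `L²(0,T)` comparison between `ψ` and
`φ t = ψ t + β ∫ₜᵀ e^{(β-η)(s-t)} ψ s ds`. -/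
theorem volterra_L2_equivalence (β η T : ℝ) (hβ : 0 < β) (hη : β < η) (hT : 0 < T) :
    ∃ c₁ > (0:ℝ), ∃ c₂ > (0:ℝ), ∀ φ ψ : ℝ → ℝ,
      ContinuousOn φ (Icc 0 T) → ContinuousOn ψ (Icc 0 T) →
      (∀ t ∈ Icc (0:ℝ) T,
        φ t = ψ t + β * ∫ s in t..T, Real.exp ((β - η) * (s - t)) * ψ s) →
      c₁ * (∫ t in (0:ℝ)..T, |φ t| ^ 2) ≤ (∫ t in (0:ℝ)..T, |ψ t| ^ 2) ∧
      (∫ t in (0:ℝ)..T, |ψ t| ^ 2) ≤ c₂ * (∫ t in (0:ℝ)..T, |φ t| ^ 2) := by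
  have h0T : (0:ℝ) ∈ Icc (0:ℝ) T := ⟨le_refl _, hT.le⟩
  have hTT : T ∈ Icc (0:ℝ) T := ⟨hT.le, le_refl _⟩
  set A₂ : ℝ := β * Real.exp (β*T) with hA₂
  refine ⟨(2 + 2*β^2*T^2)⁻¹, by positivity, 2 + 2*A₂^2*T^2, by positivity, ?_⟩
  intro φ ψ hφc hψc hrel
  have hφa : ContinuousOn (fun t => |φ t|) (Icc 0 T) := hφc.abs
  have hψa : ContinuousOn (fun t => |ψ t|) (Icc 0 T) := hψc.abs
  -- key pointwise bound: |∫ₜᵀ e ψ| ≤ ∫ₜᵀ |ψ|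
  have hkernel : ∀ t ∈ Icc (0:ℝ) T,
      |∫ s in t..T, Real.exp ((β - η) * (s - t)) * ψ s| ≤ ∫ s in t..T, |ψ s| := by
    intro t ht
    calc |∫ s in t..T, Real.exp ((β - η) * (s - t)) * ψ s|
        ≤ ∫ s in t..T, |Real.exp ((β - η) * (s - t)) * ψ s| :=
          intervalIntegral.abs_integral_le_integral_abs ht.2
      _ ≤ ∫ s in t..T, |ψ s| := by
          apply intervalIntegral.integral_mono_on ht.2
          · apply ContinuousOn.intervalIntegrable
            apply ContinuousOn.abs
            apply ContinuousOn.mul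
            · fun_prop
            · exact hψc.mono (uIcc_subset_Icc ht hTT)
          · exact ii_of_contOn hψa ht hTT
          · intro s hs
            rw [abs_mul, Real.abs_exp]
            have : Real.exp ((β - η) * (s - t)) ≤ 1 := by
              apply Real.exp_le_one_iff.2  
              apply mul_nonpos_of_nonpos_of_nonneg
              · linarith
              · linarith [hs.1]
            nlinarith [abs_nonneg (ψ s), this, Real.exp_pos ((β - η) * (s - t))]
  -- forward bound: |φ t| ≤ |ψ t| + β ∫₀ᵀ |ψ|
  have hforward : ∀ t ∈ Icc (0:ℝ) T,
      |φ t| ≤ |ψ t| + β * ∫ s in (0:ℝ)..T, |ψ s| := by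
    intro t ht
    have h1 := hrel t ht
    have h2 := hkernel t ht
    have h3 : (∫ s in t..T, |ψ s|) ≤ ∫ s in (0:ℝ)..T, |ψ s| := by
      rw [← sub_nonneg, ← intervalIntegral.integral_add_adjacent_intervals
        (ii_of_contOn hψa h0T ht) (ii_of_contOn hψa ht hTT)]
      have : (0:ℝ) ≤ ∫ s in (0:ℝ)..t, |ψ s| :=
        intervalIntegral.integral_nonneg ht.1 (fun s _ => abs_nonneg _)
      linarith
    calc |φ t| ≤ |ψ t| + β * |∫ s in t..T, Real.exp ((β - η) * (s - t)) * ψ s| := by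
          rw [h1]; exact (abs_add_le _ _).trans (by rw [abs_mul, abs_of_pos hβ])
      _ ≤ |ψ t| + β * ∫ s in (0:ℝ)..T, |ψ s| := by nlinarith [h2, h3]
  -- backward: Grönwall
  have hback0 : ∀ t ∈ Icc (0:ℝ) T, |ψ t| ≤ |φ t| + β * ∫ s in t..T, |ψ s| := by
    intro t ht
    have h1 := hrel t ht
    have h2 := hkernel t ht
    have : |ψ t| ≤ |φ t| + β * |∫ s in t..T, Real.exp ((β - η) * (s - t)) * ψ s| := by
      have : ψ t = φ t - β * ∫ s in t..T, Real.exp ((β - η) * (s - t)) * ψ s := by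
        rw [h1]; ring
      rw [this]
      refine (abs_sub _ _).trans ?_
      rw [abs_mul, abs_of_pos hβ]
    nlinarith [h2, this]
  have hgron := gronwall_aux hβ hT hψa hφa (fun t _ => abs_nonneg _) (fun t _ => abs_nonneg _)
    hback0
  have hbackward : ∀ t ∈ Icc (0:ℝ) T,
      |ψ t| ≤ |φ t| + A₂ * ∫ s in (0:ℝ)..T, |φ s| := by
    intro t ht
    have h1 := hback0 t ht
    have h2 := hgron t ht
    have : β * (∫ s in t..T, |ψ s|) ≤ β * (Real.exp (β*T) * ∫ s in (0:ℝ)..T, |φ s|) :=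
      mul_le_mul_of_nonneg_left h2 hβ.le
    rw [hA₂]
    nlinarith [h1, this]
  constructor
  · -- c₁ direction
    have := l2_aux hT hβ.le hφa hψa (fun t _ => abs_nonneg _) (fun t _ => abs_nonneg _) hforward
    rw [inv_mul_le_iff₀ (by positivity)]
    exact this
  · exact l2_aux hT (by positivity) hψa hφa (fun t _ => abs_nonneg _) (fun t _ => abs_nonneg _)
      hbackward
end

section
/- Let λ_n = n², 0 < β < η, A ≠ 0, and p_n ∈ ℂ with Re p_n = λ_n + O(λ_n^{-3}) and Im p_n = O(λ_n^{-5}), p_n ≠ 0. Define d_n = (1/A)(p_n² - Re p_n + β Re p_n/(η + i p_n)). If i p_n is never a root of Λ³ + ηΛ² + (Re p_n)Λ + (Re p_n)(η-β) = 0, then there exist constants m₁, m₂ > 0 such that m₁ |p_n|² ≤ |d_n| ≤ m₂ |p_n|² for all n. -/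
noncomputable def Qaux (β η : ℝ) (p : ℕ → ℂ) (n : ℕ) : ℂ :=
  (p n) ^ 2 - ((p n).re : ℂ) + (β : ℂ) * ((p n).re : ℂ) / ((η : ℂ) + Complex.I * p n)

lemma denom_ne_aux (β η : ℝ) (hβ : 0 < β) (p : ℕ → ℂ) (n : ℕ)
    (hroot : (Complex.I * p n) ^ 3 + (η : ℂ) * (Complex.I * p n) ^ 2
        + ((p n).re : ℂ) * (Complex.I * p n) + ((p n).re : ℂ) * ((η : ℂ) - (β : ℂ)) ≠ 0) :
    (η : ℂ) + Complex.I * p n ≠ 0 := by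
  intro h
  have hp : Complex.I * p n = -(η : ℂ) := by linear_combination h
  have p_eq : p n = (η : ℂ) * Complex.I := by
    apply mul_left_cancel₀ Complex.I_ne_zero
    rw [hp]
    linear_combination (-(η:ℂ)) * Complex.I_sq
  have hre : (p n).re = 0 := by rw [p_eq]; simp
  apply hroot
  rw [hp, hre]
  push_cast
  ring

lemma Qaux_ne (β η : ℝ) (hβ : 0 < β) (p : ℕ → ℂ) (n : ℕ)
    (hroot : (Complex.I * p n) ^ 3 + (η : ℂ) * (Complex.I * p n) ^ 2
        + ((p n).re : ℂ) * (Complex.I * p n) + ((p n).re : ℂ) * ((η : ℂ) - (β : ℂ)) ≠ 0) :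
    Qaux β η p n ≠ 0 := by
  have hden := denom_ne_aux β η hβ p n hroot
  intro h0
  apply hroot
  have h1 : (β:ℂ) * ((p n).re:ℂ) / ((η:ℂ) + Complex.I * p n) * ((η:ℂ) + Complex.I * p n)
      = (β:ℂ) * ((p n).re:ℂ) := div_mul_cancel₀ _ hden
  have key : (Complex.I * p n) ^ 3 + (η : ℂ) * (Complex.I * p n) ^ 2
        + ((p n).re : ℂ) * (Complex.I * p n) + ((p n).re : ℂ) * ((η : ℂ) - (β : ℂ))
      = -(Qaux β η p n) * ((η:ℂ) + Complex.I * p n) := by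
    unfold Qaux
    linear_combination h1 + (Complex.I * (p n)^3 + (η:ℂ) * (p n)^2) * Complex.I_sq
  rw [key, h0]
  ring

lemma Qaux_big (β η : ℝ) (hβ : 0 < β) (hη : β < η) (p : ℕ → ℂ) (n : ℕ)
    (hR : 2*η + 2*β + 2 ≤ norm (p n)) :
    norm (p n)^2 / 2 ≤ norm (Qaux β η p n) ∧
      norm (Qaux β η p n) ≤ 3/2 * norm (p n)^2 := by
  have hη0 : 0 < η := hβ.trans hη
  set a := norm (p n) with ha
  have ha2 : 2 ≤ a := by linarith
  have hden_lb : a/2 ≤ norm ((η:ℂ) + Complex.I * p n) := by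
    have h1 : a ≤ norm ((η:ℂ) + Complex.I * p n) + η := by
      calc a = norm (Complex.I * p n) := by rw [norm_mul, Complex.norm_I, one_mul]
        _ = norm (((η:ℂ) + Complex.I * p n) + (-(η:ℂ))) := by congr 1; ring
        _ ≤ norm ((η:ℂ) + Complex.I * p n) + norm (-(η:ℂ)) :=
            norm_add_le _ _
        _ = norm ((η:ℂ) + Complex.I * p n) + η := by
            rw [norm_neg, Complex.norm_real, Real.norm_eq_abs, abs_of_pos hη0]
    linarith
  have hre : |(p n).re| ≤ a := Complex.abs_re_le_norm _
  have hdenpos : 0 < norm ((η:ℂ) + Complex.I * p n) := by linarith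
  have hfrac : norm ((β:ℂ) * ((p n).re:ℂ) / ((η:ℂ) + Complex.I * p n)) ≤ 2*β := by
    rw [norm_div, norm_mul, Complex.norm_real, Real.norm_eq_abs, Complex.norm_real, Real.norm_eq_abs, abs_of_pos hβ,
      div_le_iff₀ hdenpos]
    nlinarith [hden_lb, hre, hβ.le]
  have hdiff : norm (Qaux β η p n - (p n)^2) ≤ a + 2*β := by
    have e : Qaux β η p n - (p n)^2
        = -((p n).re:ℂ) + (β:ℂ) * ((p n).re:ℂ) / ((η:ℂ) + Complex.I * p n) := by
      unfold Qaux; ring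
    rw [e]
    calc norm (-((p n).re:ℂ) + (β:ℂ) * ((p n).re:ℂ) / ((η:ℂ) + Complex.I * p n))
        ≤ norm (-((p n).re:ℂ))
          + norm ((β:ℂ) * ((p n).re:ℂ) / ((η:ℂ) + Complex.I * p n)) :=
          norm_add_le _ _
      _ ≤ a + 2*β := by
          rw [norm_neg, Complex.norm_real, Real.norm_eq_abs]; linarith
  have hkey : a + 2*β ≤ a^2/2 := by nlinarith
  constructor
  · have h3 : a^2 ≤ norm (Qaux β η p n) + (a + 2*β) := by
      calc a^2 = norm ((p n)^2) := by rw [norm_pow]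
        _ = norm (Qaux β η p n + ((p n)^2 - Qaux β η p n)) := by congr 1; ring
        _ ≤ norm (Qaux β η p n) + norm ((p n)^2 - Qaux β η p n) :=
            norm_add_le _ _
        _ ≤ norm (Qaux β η p n) + (a + 2*β) := by
            have : norm ((p n)^2 - Qaux β η p n) = norm (Qaux β η p n - (p n)^2) :=
              norm_sub_rev _ _
            linarith [hdiff, this.le, this.ge]
    linarith
  · calc norm (Qaux β η p n)
        = norm ((p n)^2 + (Qaux β η p n - (p n)^2)) := by congr 1; ring
      _ ≤ norm ((p n)^2) + norm (Qaux β η p n - (p n)^2) := norm_add_le _ _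
      _ ≤ a^2 + (a + 2*β) := by rw [norm_pow]; linarith
      _ ≤ 3/2 * a^2 := by nlinarith

/-- Two-sided bound `m₁|p_n|² ≤ |d_n| ≤ m₂|p_n|²` for the coupling coefficients
`d_n = (1/A)(p_n² - Re p_n + β Re p_n/(η + i p_n))`, with `λ_n = n²` asymptotics
`Re p_n = n² + O(n⁻⁶)`, `Im p_n = O(n⁻¹⁰)`. -/
theorem coupling_coefficient_bounds (β η A : ℝ) (hβ : 0 < β) (hη : β < η) (hA : A ≠ 0)
    (p : ℕ → ℂ) (hp0 : ∀ n, 1 ≤ n → p n ≠ 0)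
    (hRe : ∃ C : ℝ, ∀ n : ℕ, 1 ≤ n → |(p n).re - (n : ℝ) ^ 2| ≤ C / (n : ℝ) ^ 6)
    (hIm : ∃ C : ℝ, ∀ n : ℕ, 1 ≤ n → |(p n).im| ≤ C / (n : ℝ) ^ 10)
    (hroot : ∀ n : ℕ, 1 ≤ n →
      (Complex.I * p n) ^ 3 + (η : ℂ) * (Complex.I * p n) ^ 2
        + ((p n).re : ℂ) * (Complex.I * p n) + ((p n).re : ℂ) * ((η : ℂ) - (β : ℂ)) ≠ 0) :
    ∃ m₁ > (0:ℝ), ∃ m₂ > (0:ℝ), ∀ n : ℕ, 1 ≤ n →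
      m₁ * norm (p n) ^ 2
        ≤ norm ((1 / (A : ℂ)) *
            ((p n) ^ 2 - ((p n).re : ℂ)
              + (β : ℂ) * ((p n).re : ℂ) / ((η : ℂ) + Complex.I * p n))) ∧
      norm ((1 / (A : ℂ)) *
            ((p n) ^ 2 - ((p n).re : ℂ)
              + (β : ℂ) * ((p n).re : ℂ) / ((η : ℂ) + Complex.I * p n)))
        ≤ m₂ * norm (p n) ^ 2 := by
  obtain ⟨C, hC⟩ := hRe
  have hη0 : 0 < η := hβ.trans hη
  set N : ℕ := ⌈Real.sqrt (2*η + 2*β + 2 + |C|)⌉₊ + 1 with hNdef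
  have hN1 : 1 ≤ N := Nat.le_add_left 1 _
  have hSne : (Finset.Icc 1 N).Nonempty := ⟨1, Finset.mem_Icc.mpr ⟨le_refl 1, hN1⟩⟩
  have hA0 : (0:ℝ) < |A| := abs_pos.mpr hA
  set g : ℕ → ℝ := fun n => norm (Qaux β η p n) / norm (p n)^2 with hgdef
  set m₀ := (Finset.Icc 1 N).inf' hSne g with hm₀def
  set M₀ := (Finset.Icc 1 N).sup' hSne g with hM₀def
  have hgpos : ∀ k ∈ Finset.Icc 1 N, 0 < g k := by
    intro k hk
    have hk1 : 1 ≤ k := (Finset.mem_Icc.mp hk).1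
    have hq := Qaux_ne β η hβ p k (hroot k hk1)
    have hpk : 0 < norm (p k) := norm_pos_iff.mpr (hp0 k hk1)
    exact div_pos (norm_pos_iff.mpr hq) (by positivity)
  have hm₀ : 0 < m₀ := (Finset.lt_inf'_iff hSne).mpr hgpos
  refine ⟨min (1/2) m₀ / |A|, by positivity, max (3/2) M₀ / |A|,
    div_pos (lt_of_lt_of_le (by norm_num) (le_max_left _ _)) hA0, ?_⟩
  intro n hn
  have hpn := hp0 n hn
  have hap : 0 < norm (p n) := norm_pos_iff.mpr hpn
  have habs : norm ((1/(A:ℂ)) * Qaux β η p n) = norm (Qaux β η p n) / |A| := by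
    rw [norm_mul, norm_div, norm_one, Complex.norm_real, Real.norm_eq_abs, div_mul_eq_mul_div, one_mul]
  have key : min (1/2) m₀ * norm (p n)^2 ≤ norm (Qaux β η p n) ∧
      norm (Qaux β η p n) ≤ max (3/2) M₀ * norm (p n)^2 := by
    by_cases hcase : n ≤ N
    · have hmem : n ∈ Finset.Icc 1 N := Finset.mem_Icc.mpr ⟨hn, hcase⟩
      have h1 : m₀ ≤ g n := Finset.inf'_le _ hmem
      have h2 : g n ≤ M₀ := Finset.le_sup' _ hmem
      have hgn : g n * norm (p n)^2 = norm (Qaux β η p n) := by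
        rw [hgdef]
        exact div_mul_cancel₀ _ (by positivity)
      constructor
      · calc min (1/2) m₀ * norm (p n)^2 ≤ m₀ * norm (p n)^2 :=
              mul_le_mul_of_nonneg_right (min_le_right _ _) (by positivity)
          _ ≤ g n * norm (p n)^2 := mul_le_mul_of_nonneg_right h1 (by positivity)
          _ = norm (Qaux β η p n) := hgn
      · calc norm (Qaux β η p n) = g n * norm (p n)^2 := hgn.symm
          _ ≤ M₀ * norm (p n)^2 := mul_le_mul_of_nonneg_right h2 (by positivity)
          _ ≤ max (3/2) M₀ * norm (p n)^2 :=
              mul_le_mul_of_nonneg_right (le_max_right _ _) (by positivity)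
    · have hcast : (1:ℝ) ≤ (n:ℝ) := by exact_mod_cast hn
      have h16 : (1:ℝ) ≤ (n:ℝ)^6 := one_le_pow₀ hcast
      have h3 : |(p n).re - (n:ℝ)^2| ≤ |C| := by
        refine (hC n hn).trans ?_
        calc C / (n:ℝ)^6 ≤ |C| / (n:ℝ)^6 := by
              gcongr
              exact le_abs_self C
          _ ≤ |C| / 1 := by gcongr
          _ = |C| := div_one _
      have hNn : (N:ℝ) ≤ (n:ℝ) := by exact_mod_cast le_of_not_ge hcase
      have hsq : Real.sqrt (2*η + 2*β + 2 + |C|) ≤ (n:ℝ) := by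
        calc Real.sqrt (2*η + 2*β + 2 + |C|) ≤ (⌈Real.sqrt (2*η + 2*β + 2 + |C|)⌉₊ : ℝ) :=
              Nat.le_ceil _
          _ ≤ (N:ℝ) := by rw [hNdef]; push_cast; linarith
          _ ≤ (n:ℝ) := hNn
      have hy0 : (0:ℝ) ≤ 2*η + 2*β + 2 + |C| := by positivity
      have h4 : 2*η + 2*β + 2 + |C| ≤ (n:ℝ)^2 := by
        nlinarith [Real.sq_sqrt hy0, Real.sqrt_nonneg (2*η + 2*β + 2 + |C|), hsq]
      have h5 : 2*η + 2*β + 2 ≤ (p n).re := by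
        have := abs_le.mp h3
        linarith [this.1]
      have hlarge : 2*η + 2*β + 2 ≤ norm (p n) := h5.trans (Complex.re_le_norm _)
      obtain ⟨hl, hu⟩ := Qaux_big β η hβ hη p n hlarge
      constructor
      · calc min (1/2) m₀ * norm (p n)^2 ≤ 1/2 * norm (p n)^2 :=
              mul_le_mul_of_nonneg_right (min_le_left _ _) (by positivity)
          _ = norm (p n)^2 / 2 := by ring
          _ ≤ norm (Qaux β η p n) := hl
      · calc norm (Qaux β η p n) ≤ 3/2 * norm (p n)^2 := hu
          _ ≤ max (3/2) M₀ * norm (p n)^2 :=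
              mul_le_mul_of_nonneg_right (le_max_left _ _) (by positivity)
  constructor
  · show min (1/2) m₀ / |A| * norm (p n)^2 ≤ norm ((1/(A:ℂ)) * Qaux β η p n)
    rw [habs, div_mul_eq_mul_div]
    gcongr
    exact key.1
  · show norm ((1/(A:ℂ)) * Qaux β η p n) ≤ max (3/2) M₀ / |A| * norm (p n)^2
    rw [habs, div_mul_eq_mul_div]
    gcongr
    exact key.2
end

section
/- Let T > 0, ε ∈ (0,1), M > 2π/(T(1-ε)), and let (p_n) be complex numbers satisfying Re p_{n+1} - Re p_n → +∞ and Im p_n → 0. Then there exists n₀ ∈ ℕ such that for all n ≥ n₀: ∑_{m ≥ n₀, m ≠ n} |K(p_n - conj(p_m))| ≤ 2π/(TM²), where K(u) = πT/(π² - T²u²). -/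
open Filter

lemma hasSum_int_inv_sq :
    HasSum (fun k : ℤ => ((k : ℝ) ^ 2)⁻¹) (Real.pi ^ 2 / 6 + Real.pi ^ 2 / 6) := by
  have h0 : HasSum (fun n : ℕ => (1 : ℝ) / (n : ℝ) ^ 2) (Real.pi ^ 2 / 6) := hasSum_zeta_two
  have h1 : HasSum (fun n : ℕ => (((n : ℤ) : ℝ) ^ 2)⁻¹) (Real.pi ^ 2 / 6) := by
    simpa [one_div] using h0
  have h3 : HasSum (fun n : ℕ => (1 : ℝ) / ((n + 1 : ℕ) : ℝ) ^ 2)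
      (Real.pi ^ 2 / 6 - ∑ i ∈ Finset.range 1, (1 : ℝ) / (i : ℝ) ^ 2) :=
    (hasSum_nat_add_iff' 1).mpr h0
  simp only [Finset.sum_range_one, Nat.cast_zero] at h3
  norm_num at h3
  have h2 : HasSum (fun n : ℕ => (((-((n : ℤ) + 1) : ℤ) : ℝ) ^ 2)⁻¹) (Real.pi ^ 2 / 6) := by
    convert h3 using 2 with n
    push_cast
    rw [neg_sq]
  exact HasSum.of_nat_of_neg_add_one (f := fun k : ℤ => ((k : ℝ) ^ 2)⁻¹) h1 h2

set_option maxHeartbeats 1000000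

/-- Off-diagonal smallness for the kernel `K u = πT/(π² - T²u²)`:
for `n ≥ n₀`, `∑_{m ≥ n₀, m ≠ n} |K (pₙ - conj pₘ)| ≤ 2π/(TM²)`. -/
theorem off_diagonal_kernel_bound (T ε M : ℝ) (hT : 0 < T) (hε : 0 < ε) (hε1 : ε < 1)
    (hM : 2 * Real.pi / (T * (1 - ε)) < M)
    (p : ℕ → ℂ)
    (hsep : Tendsto (fun n => (p (n + 1)).re - (p n).re) atTop atTop)
    (him : Tendsto (fun n => (p n).im) atTop (nhds 0)) :
    ∃ n₀ : ℕ, ∀ n ≥ n₀,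
      (∑' m : {m : ℕ // n₀ ≤ m ∧ m ≠ n},
        ‖((Real.pi : ℂ) * T /
          ((Real.pi : ℂ) ^ 2 - (T : ℂ) ^ 2 * (p n - (starRingEnd ℂ) (p m.1)) ^ 2))‖)
      ≤ 2 * Real.pi / (T * M ^ 2) := by
  have hπ : 0 < Real.pi := Real.pi_pos
  have h1e : 0 < 1 - ε := by linarith
  have hM0 : 0 < M := lt_trans (by positivity) hM
  obtain ⟨G, hGdef⟩ : ∃ G : ℝ, G = 2 * M + 2 * Real.pi / T := ⟨_, rfl⟩
  have hG0 : 0 < G := by rw [hGdef]; positivity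
  have hTG : 2 * Real.pi ≤ T * G := by
    have h : T * G = 2 * M * T + 2 * Real.pi := by
      rw [hGdef]; field_simp
    nlinarith
  obtain ⟨n₀, hn₀⟩ := eventually_atTop.mp (hsep.eventually_ge_atTop G)
  refine ⟨n₀, fun n hn => ?_⟩
  -- gap growth
  have grow : ∀ a : ℕ, n₀ ≤ a → ∀ d : ℕ, (p a).re + d * G ≤ (p (a + d)).re := by
    intro a ha d
    induction d with
    | zero => simp
    | succ d ih =>
      have h1 := hn₀ (a + d) (le_trans ha (Nat.le_add_right _ _))
      have h2 : (p a).re + (d + 1 : ℕ) * G = ((p a).re + d * G) + G := by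
        push_cast; ring
      rw [h2, show a + (d + 1) = (a + d) + 1 from rfl]
      have := hn₀ (a + d) (le_trans ha (Nat.le_add_right _ _))
      linarith
  -- separation
  have hsep' : ∀ m : ℕ, n₀ ≤ m → m ≠ n → |(m : ℝ) - n| * G ≤ |(p n).re - (p m).re| := by
    intro m hm hmn
    rcases lt_or_gt_of_ne hmn with h | h
    · have hd := grow m hm (n - m)
      rw [Nat.add_sub_cancel' h.le] at hd
      have h1 : ((n - m : ℕ) : ℝ) = (n : ℝ) - m := by
        push_cast [Nat.cast_sub h.le]; ring
      rw [h1] at hd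
      rw [abs_of_nonpos (by simp; exact_mod_cast h.le),
          abs_of_nonneg (by nlinarith)]
      nlinarith
    · have hd := grow n hn (m - n)
      rw [Nat.add_sub_cancel' h.le] at hd
      have h1 : ((m - n : ℕ) : ℝ) = (m : ℝ) - n := by
        push_cast [Nat.cast_sub h.le]; ring
      rw [h1] at hd
      rw [abs_of_nonneg (by simp; exact_mod_cast h.le),
          abs_of_nonpos (by nlinarith)]
      nlinarith
  obtain ⟨c, hcdef⟩ : ∃ c : ℝ, c = 2 * Real.pi / (T * G ^ 2) := ⟨_, rfl⟩
  have hc0 : 0 < c := by rw [hcdef]; positivity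
  obtain ⟨f, hfdef⟩ : ∃ f : {m : ℕ // n₀ ≤ m ∧ m ≠ n} → ℝ, f = fun m =>
    ‖((Real.pi : ℂ) * T /
      ((Real.pi : ℂ) ^ 2 - (T : ℂ) ^ 2 * (p n - (starRingEnd ℂ) (p m.1)) ^ 2))‖ := ⟨_, rfl⟩
  rw [← hfdef]
  obtain ⟨g, hgdef⟩ : ∃ g : ℤ → ℝ, g = fun k : ℤ => c * ((k : ℝ) ^ 2)⁻¹ := ⟨_, rfl⟩
  obtain ⟨e, hedef⟩ : ∃ e : {m : ℕ // n₀ ≤ m ∧ m ≠ n} → ℤ, e = fun m => (m.1 : ℤ) - n := ⟨_, rfl⟩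
  have he : Function.Injective e := by
    intro a b hab
    rw [hedef] at hab; dsimp only at hab
    have : (a.1 : ℤ) = b.1 := by omega
    exact Subtype.ext (by exact_mod_cast this)
  have hgsum : HasSum g (c * (Real.pi ^ 2 / 6 + Real.pi ^ 2 / 6)) := by
    rw [hgdef]; exact hasSum_int_inv_sq.mul_left c
  -- key pointwise bound
  have key : ∀ m : {m : ℕ // n₀ ≤ m ∧ m ≠ n}, f m ≤ g (e m) := by
    rintro ⟨m, hm, hmn⟩
    obtain ⟨u, hudef⟩ : ∃ u : ℂ, u = p n - (starRingEnd ℂ) (p m) := ⟨_, rfl⟩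
    obtain ⟨r, hrdef⟩ : ∃ r : ℝ, r = |(m : ℝ) - n| := ⟨_, rfl⟩
    have hr1 : (1 : ℝ) ≤ r := by
      have h1 : (1 : ℤ) ≤ |(m : ℤ) - n| := Int.one_le_abs (by omega)
      have h2 : ((|(m : ℤ) - n| : ℤ) : ℝ) = r := by
        rw [hrdef]; push_cast; ring
      rw [← h2]; exact_mod_cast h1
    have hure : u.re = (p n).re - (p m).re := by
      rw [hudef]; simp [Complex.sub_re, Complex.conj_re]
    have habs_u : r * G ≤ ‖u‖ := by
      refine le_trans ?_ (Complex.abs_re_le_norm u)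
      rw [hure, hrdef]; exact hsep' m hm hmn
    have habs_u0 : 0 ≤ ‖u‖ := norm_nonneg _
    have h2 : ‖(T : ℂ) ^ 2 * u ^ 2‖ = T ^ 2 * ‖u‖ ^ 2 := by
      rw [norm_mul, norm_pow, norm_pow, Complex.norm_real, Real.norm_eq_abs, abs_of_pos hT]
    have hD : T ^ 2 * r ^ 2 * G ^ 2 / 2 ≤
        ‖(Real.pi : ℂ) ^ 2 - (T : ℂ) ^ 2 * u ^ 2‖ := by
      have h3 : ‖(Real.pi : ℂ) ^ 2 - (T : ℂ) ^ 2 * u ^ 2‖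
          = ‖(T : ℂ) ^ 2 * u ^ 2 - (Real.pi : ℂ) ^ 2‖ :=
        norm_sub_rev _ _
      have h4 : ‖(T : ℂ) ^ 2 * u ^ 2‖ - ‖(Real.pi : ℂ) ^ 2‖
          ≤ ‖(T : ℂ) ^ 2 * u ^ 2 - (Real.pi : ℂ) ^ 2‖ := by
        have := norm_sub_norm_le ((T : ℂ) ^ 2 * u ^ 2) ((Real.pi : ℂ) ^ 2)
        exact this
      have h5 : ‖(Real.pi : ℂ) ^ 2‖ = Real.pi ^ 2 := by
        rw [norm_pow, Complex.norm_real, Real.norm_eq_abs, abs_of_pos hπ]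
      rw [h3]
      rw [h2, h5] at h4
      have h6 : r * G * (r * G) ≤ ‖u‖ * ‖u‖ :=
        mul_le_mul habs_u habs_u (by positivity) habs_u0
      have h7 : 4 * Real.pi ^ 2 ≤ T ^ 2 * G ^ 2 := by nlinarith
      have h8 : (1 : ℝ) ≤ r ^ 2 := by nlinarith
      have ha : T ^ 2 * r ^ 2 * G ^ 2 ≤ T ^ 2 * ‖u‖ ^ 2 := by
        nlinarith [mul_le_mul_of_nonneg_left h6 (sq_nonneg T)]
      have hcc : T ^ 2 * G ^ 2 ≤ T ^ 2 * r ^ 2 * G ^ 2 := by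
        nlinarith [sq_nonneg (T * G)]
      nlinarith [h4, ha, h7, hcc]
    have hDpos : 0 < ‖(Real.pi : ℂ) ^ 2 - (T : ℂ) ^ 2 * u ^ 2‖ := by
      refine lt_of_lt_of_le ?_ hD; positivity
    have hnum : ‖(Real.pi : ℂ) * T‖ = Real.pi * T := by
      rw [norm_mul, Complex.norm_real, Complex.norm_real, Real.norm_eq_abs, Real.norm_eq_abs, abs_of_pos hπ, abs_of_pos hT]
    have hval : f ⟨m, hm, hmn⟩ =
        Real.pi * T / ‖(Real.pi : ℂ) ^ 2 - (T : ℂ) ^ 2 * u ^ 2‖ := by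
      rw [hfdef]; dsimp only
      rw [← hudef, norm_div, hnum]
    have hge : g (e ⟨m, hm, hmn⟩) = c * (r ^ 2)⁻¹ := by
      rw [hgdef, hedef]; dsimp only
      congr 1
      rw [hrdef]
      push_cast
      rw [sq_abs]
    rw [hval, hge]
    have hstep : Real.pi * T / ‖(Real.pi : ℂ) ^ 2 - (T : ℂ) ^ 2 * u ^ 2‖
        ≤ Real.pi * T / (T ^ 2 * r ^ 2 * G ^ 2 / 2) := by
      apply div_le_div_of_nonneg_left (by positivity) (by positivity) hD
    refine le_trans hstep (le_of_eq ?_)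
    rw [hcdef]
    field_simp
  have hgsummable : Summable g := hgsum.summable
  have hfsummable : Summable f := by
    refine Summable.of_nonneg_of_le (fun m => ?_) key (hgsummable.comp_injective he)
    rw [hfdef]; exact norm_nonneg _
  have hle : (∑' m, f m) ≤ ∑' k, g k := by
    refine Summable.tsum_le_tsum_of_inj e he (fun k _ => ?_) key hfsummable hgsummable
    rw [hgdef]; dsimp only; positivity
  have htg : (∑' k, g k) = c * (Real.pi ^ 2 / 6 + Real.pi ^ 2 / 6) := hgsum.tsum_eq
  have hfinal : c * (Real.pi ^ 2 / 6 + Real.pi ^ 2 / 6) ≤ 2 * Real.pi / (T * M ^ 2) := by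
    have hG2M : 2 * M ≤ G := by
      have h9 : 0 < 2 * Real.pi / T := by positivity
      rw [hGdef]; linarith
    have hpi2 : Real.pi ^ 2 < 12 := by
      nlinarith [Real.pi_lt_d2, Real.pi_pos]
    have hG2 : 4 * M ^ 2 ≤ G ^ 2 := by nlinarith
    have hkey : Real.pi ^ 2 * M ^ 2 ≤ 3 * G ^ 2 := by nlinarith
    rw [hcdef, div_mul_eq_mul_div, div_le_div_iff₀ (by positivity) (by positivity)]
    have hTpi : (0 : ℝ) ≤ 2 * Real.pi * T / 3 := by positivity
    nlinarith [mul_le_mul_of_nonneg_left hkey hTpi]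
  calc (∑' m, f m) ≤ ∑' k, g k := hle
    _ = c * (Real.pi ^ 2 / 6 + Real.pi ^ 2 / 6) := htg
    _ ≤ 2 * Real.pi / (T * M ^ 2) := hfinal
end
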